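/- Let (Ω, d) be a complete separable metric space and (X, Σ, m) a probability space. Then every Borel L^0-valued measure of bounded variation on Ω is Radon, i.e. 𝓜(Ω; L^0(m)) = 𝔐(Ω; L^0(m)). -/

import Mathlib

open Filter Set Topology Function
open MeasureTheory (Measure IsProbabilityMeasure)

noncomputable section

namespace RNMPaper

variable {X : Type*} [MeasurableSpace X]

/-- The canonical distance on `L⁰(m)`, `d(f,g) = ∫ |f-g| ∧ 1 dm`. -/
def dL0 (m : Measure X) (f g : X →ₘ[m] ℝ) : ℝ := ∫ x, min |f x - g x| 1 ∂m

/-- Convergence of a sequence in `L⁰(m)` (i.e. convergence in measure). -/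
def TendstoL0 (m : Measure X) (f : ℕ → X →ₘ[m] ℝ) (g : X →ₘ[m] ℝ) : Prop :=
  Tendsto (fun n => dL0 m (f n) g) atTop (𝓝 0)

/-- `S` is the sum of the (nonnegative) sequence `f` in `L⁰(m)`: the least upper bound
of the partial sums. -/
def HasL0Sum (m : Measure X) (f : ℕ → X →ₘ[m] ℝ) (S : X →ₘ[m] ℝ) : Prop :=
  IsLUB (Set.range fun n => ∑ i ∈ Finset.range n, f i) S

/-- A random normed module with base probability space `(X, Σ, m)`: an `L⁰(m)`-module
with an `L⁰`-norm. -/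
structure RNMod (m : Measure X) where
  M : Type*
  [grp : AddCommGroup M]
  smul : (X →ₘ[m] ℝ) → M → M
  nrm : M → X →ₘ[m] ℝ
  smul_add : ∀ f v w, smul f (v + w) = smul f v + smul f w
  add_smul : ∀ f g v, smul (f + g) v = smul f v + smul g v
  one_smul : ∀ v, smul 1 v = v
  mul_smul : ∀ f g v, smul (f * g) v = smul f (smul g v)
  nrm_nonneg : ∀ v, 0 ≤ nrm v
  nrm_eq_zero : ∀ v, nrm v = 0 ↔ v = 0
  nrm_add_le : ∀ v w, nrm (v + w) ≤ nrm v + nrm w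
  nrm_smul : ∀ f v, nrm (smul f v) = |f| * nrm v

attribute [instance] RNMod.grp

/-- The distance on a random normed module. -/
def RNMod.dist {m : Measure X} (R : RNMod m) (v w : R.M) : ℝ := dL0 m (R.nrm (v - w)) 0

/-- Completeness of a random normed module: every Cauchy sequence converges. -/
def RNMod.Complete {m : Measure X} (R : RNMod m) : Prop :=
  ∀ v : ℕ → R.M, (∀ ε > (0:ℝ), ∃ N, ∀ p ≥ N, ∀ q ≥ N, R.dist (v p) (v q) < ε) →
    ∃ w : R.M, Tendsto (fun n => R.dist (v n) w) atTop (𝓝 0)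

variable {Ω : Type*}

/-- An `L⁰(m)`-valued measure on the measurable space `Ω` (the values on non-measurable
sets are irrelevant): `μ ∅ = 0` and, for every sequence of pairwise disjoint measurable
sets, the norms `|μ (A n)|` are summable (partial sums order bounded) and the finite
partial sums of `μ (A n)` converge (as a net over finite subsets, in the metric of
`L⁰(m)`) to `μ (⋃ n, A n)`. -/
structure L0Measure (m : Measure X) (Ω : Type*) [MeasurableSpace Ω] where
  toFun : Set Ω → X →ₘ[m] ℝ
  empty' : toFun ∅ = 0
  summable' : ∀ A : ℕ → Set Ω, (∀ n, MeasurableSet (A n)) → Pairwise (Disjoint on A) →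
    BddAbove (Set.range fun n => ∑ i ∈ Finset.range n, |toFun (A i)|)
  additive' : ∀ A : ℕ → Set Ω, (∀ n, MeasurableSet (A n)) → Pairwise (Disjoint on A) →
    Tendsto (fun F : Finset ℕ => dL0 m (∑ i ∈ F, toFun (A i)) (toFun (⋃ n, A n)))
      atTop (𝓝 0)

/-- The collection of all sums `∑ₙ |μ (B n)|` over countable measurable partitions
`(B n)` of `A` (those sums that exist in `L⁰(m)`, as least upper bounds of partial sums). -/
def partitionSums (m : Measure X) [MeasurableSpace Ω] (μ : Set Ω → X →ₘ[m] ℝ) (A : Set Ω) :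
    Set (X →ₘ[m] ℝ) :=
  {g | ∃ B : ℕ → Set Ω, (∀ n, MeasurableSet (B n)) ∧ Pairwise (Disjoint on B) ∧
    (⋃ n, B n) = A ∧ HasL0Sum m (fun n => |μ (B n)|) g}

/-- `t` is the total variation `|μ|(A)` of `μ` on `A`: `t` dominates all partial sums over
all countable measurable partitions of `A` (so each partition sum exists in `L⁰(m)` and is
`≤ t`), and `t` is the least upper bound of the set of partition sums. -/
def HasTV (m : Measure X) [MeasurableSpace Ω] (μ : Set Ω → X →ₘ[m] ℝ) (A : Set Ω)
    (t : X →ₘ[m] ℝ) : Prop :=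
  (∀ B : ℕ → Set Ω, (∀ n, MeasurableSet (B n)) → Pairwise (Disjoint on B) →
    (⋃ n, B n) = A → ∀ n, ∑ i ∈ Finset.range n, |μ (B i)| ≤ t) ∧
  IsLUB (partitionSums m μ A) t

/-- An `L⁰(m)`-valued measure of bounded variation, bundled together with its total
variation `L⁰`-valued measure `tv = |μ|`. -/
structure BVMeasure (m : Measure X) (Ω : Type*) [MeasurableSpace Ω] extends L0Measure m Ω where
  tv : Set Ω → X →ₘ[m] ℝ
  htv : ∀ A, MeasurableSet A → HasTV m toFun A (tv A)


variable {Ωt : Type*} [TopologicalSpace Ωt] [MeasurableSpace Ωt]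

/-- Inner regularity of the total variation on open sets by compact sets:
`|μ|(U) = ⋁ {|μ|(K) : K compact, K ⊆ U}` for every open `U`. -/
def InnerRegularOnOpens (m : Measure X) (μ : BVMeasure m Ωt) : Prop :=
  ∀ U : Set Ωt, IsOpen U →
    IsLUB {g | ∃ K : Set Ωt, IsCompact K ∧ K ⊆ U ∧ g = μ.tv K} (μ.tv U)

/-- Outer regularity of the total variation on Borel sets by open sets:
`|μ|(B) = ⋀ {|μ|(U) : U open, B ⊆ U}` for every Borel `B`. -/
def OuterRegularBorel (m : Measure X) (μ : BVMeasure m Ωt) : Prop :=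
  ∀ B : Set Ωt, MeasurableSet B →
    IsGLB {g | ∃ U : Set Ωt, IsOpen U ∧ B ⊆ U ∧ g = μ.tv U} (μ.tv B)

/-- Inner regularity of the total variation on all Borel sets by compact sets. -/
def InnerRegularBorel (m : Measure X) (μ : BVMeasure m Ωt) : Prop :=
  ∀ B : Set Ωt, MeasurableSet B →
    IsLUB {g | ∃ K : Set Ωt, IsCompact K ∧ K ⊆ B ∧ g = μ.tv K} (μ.tv B)

/-- A Borel `L⁰`-valued measure of bounded variation is Radon if its total variation is
inner regular on open sets by compact sets and outer regular on Borel sets by open sets. -/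
def IsRadonL0 (m : Measure X) (μ : BVMeasure m Ωt) : Prop :=
  InnerRegularOnOpens m μ ∧ OuterRegularBorel m μ


/-! ### Auxiliary development -/

section Aux

open MeasureTheory
open scoped ENNReal NNReal

variable {X : Type*} [MeasurableSpace X] {m : Measure X}

instance : IsOrderedAddMonoid (X →ₘ[m] ℝ) :=
  { add_le_add_left := by
      intro f g hfg h
      rw [← AEEqFun.coeFn_le] at hfg ⊢
      filter_upwards [AEEqFun.coeFn_add f h, AEEqFun.coeFn_add g h, hfg] with x h1 h2 h3
      simp only [h1, h2, Pi.add_apply]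
      exact add_le_add h3 le_rfl }

lemma coeFn_finsetSum {ι : Type*} (s : Finset ι) (f : ι → X →ₘ[m] ℝ) :
    ⇑(∑ i ∈ s, f i) =ᵐ[m] fun x => ∑ i ∈ s, f i x := by
  classical
  induction s using Finset.cons_induction with
  | empty => simp only [Finset.sum_empty]; exact AEEqFun.coeFn_zero
  | cons i s his ih =>
    simp only [Finset.sum_cons]
    filter_upwards [AEEqFun.coeFn_add (f i) (∑ j ∈ s, f j), ih] with x h1 h2
    simp [h1, h2]

lemma min_add_one_le (a b : ℝ) (ha : 0 ≤ a) (hb : 0 ≤ b) :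
    min (a + b) 1 ≤ min a 1 + min b 1 := by
  rcases le_or_gt 1 a with h | h
  · calc min (a+b) 1 ≤ 1 := min_le_right _ _
    _ ≤ min a 1 + min b 1 := by
        rw [min_eq_right h]
        exact le_add_of_nonneg_right (le_min hb zero_le_one)
  rcases le_or_gt 1 b with h' | h'
  · calc min (a+b) 1 ≤ 1 := min_le_right _ _
    _ ≤ min a 1 + min b 1 := by
        rw [min_eq_right h']
        exact le_add_of_nonneg_left (le_min ha zero_le_one)
  · calc min (a+b) 1 ≤ a + b := min_le_left _ _
    _ ≤ min a 1 + min b 1 := by rw [min_eq_left h.le, min_eq_left h'.le]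

section Probability

variable [IsProbabilityMeasure m]

lemma integrable_min_abs (f g : X →ₘ[m] ℝ) :
    Integrable (fun x => min |f x - g x| 1) m := by
  refine (integrable_const (1:ℝ)).mono'
    (((f.measurable.sub g.measurable).abs.min measurable_const).aestronglyMeasurable) ?_
  refine Eventually.of_forall fun x => ?_
  rw [Real.norm_eq_abs, abs_of_nonneg (le_min (abs_nonneg _) zero_le_one)]
  exact min_le_right _ _

lemma dL0_nonneg (f g : X →ₘ[m] ℝ) : 0 ≤ dL0 m f g :=
  MeasureTheory.integral_nonneg fun x => le_min (abs_nonneg _) zero_le_one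

lemma eq_of_dL0_eq_zero {f g : X →ₘ[m] ℝ} (h : dL0 m f g = 0) : f = g := by
  have h0 : (fun x => min |f x - g x| 1) =ᵐ[m] 0 :=
    (MeasureTheory.integral_eq_zero_iff_of_nonneg_ae
      (Eventually.of_forall fun x => le_min (abs_nonneg _) zero_le_one)
      (integrable_min_abs f g)).mp h
  refine AEEqFun.ext ?_
  filter_upwards [h0] with x hx
  have hx' : min |f x - g x| 1 = 0 := hx
  have habs : |f x - g x| = 0 := by
    by_contra hne
    have hpos : 0 < |f x - g x| := lt_of_le_of_ne (abs_nonneg _) (Ne.symm hne)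
    have : (0:ℝ) < min |f x - g x| 1 := lt_min hpos one_pos
    linarith
  exact sub_eq_zero.mp (abs_eq_zero.mp habs)

lemma dL0_abs_le (f g : X →ₘ[m] ℝ) : dL0 m |f| |g| ≤ dL0 m f g := by
  refine MeasureTheory.integral_mono_ae (integrable_min_abs _ _) (integrable_min_abs _ _) ?_
  filter_upwards [AEEqFun.coeFn_abs f, AEEqFun.coeFn_abs g] with x hf hg
  rw [hf, hg]
  exact min_le_min (abs_abs_sub_abs_le_abs_sub _ _) le_rfl

lemma dL0_add_le (f g f' g' : X →ₘ[m] ℝ) :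
    dL0 m (f + f') (g + g') ≤ dL0 m f g + dL0 m f' g' := by
  have h2 : dL0 m f g + dL0 m f' g'
      = ∫ x, (min |f x - g x| 1 + min |f' x - g' x| 1) ∂m :=
    (MeasureTheory.integral_add (integrable_min_abs f g) (integrable_min_abs f' g')).symm
  rw [dL0, h2]
  refine MeasureTheory.integral_mono_ae (integrable_min_abs _ _)
    ((integrable_min_abs f g).add (integrable_min_abs f' g')) ?_
  filter_upwards [AEEqFun.coeFn_add f f', AEEqFun.coeFn_add g g'] with x h1 h2
  rw [h1, h2]
  calc min |(⇑f + ⇑f') x - (⇑g + ⇑g') x| 1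
      ≤ min (|f x - g x| + |f' x - g' x|) 1 := by
        refine min_le_min ?_ le_rfl
        simp only [Pi.add_apply]
        calc |f x + f' x - (g x + g' x)| = |(f x - g x) + (f' x - g' x)| := by ring_nf
          _ ≤ |f x - g x| + |f' x - g' x| := abs_add_le _ _
    _ ≤ min |f x - g x| 1 + min |f' x - g' x| 1 :=
        min_add_one_le _ _ (abs_nonneg _) (abs_nonneg _)

lemma dL0_sum_le {ι : Type*} (s : Finset ι) (f g : ι → X →ₘ[m] ℝ) :
    dL0 m (∑ i ∈ s, f i) (∑ i ∈ s, g i) ≤ ∑ i ∈ s, dL0 m (f i) (g i) := by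
  classical
  induction s using Finset.cons_induction with
  | empty =>
    simp only [Finset.sum_empty]
    have : dL0 m (0 : X →ₘ[m] ℝ) 0 = 0 := by
      simp [dL0, sub_self, abs_zero, min_eq_left (zero_le_one' ℝ)]
    simp [this]
  | cons i s his ih =>
    simp only [Finset.sum_cons]
    exact le_trans (dL0_add_le _ _ _ _) (add_le_add le_rfl ih)

lemma le_of_tendsto_dL0 {f : ℕ → X →ₘ[m] ℝ} {g u : X →ₘ[m] ℝ}
    (hle : ∀ n, f n ≤ u) (h : Tendsto (fun n => dL0 m (f n) g) atTop (𝓝 0)) :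
    g ≤ u := by
  have hmeas : Measurable (fun x => min (max (g x - u x) 0) 1) :=
    ((g.measurable.sub u.measurable).max measurable_const).min measurable_const
  have hint : Integrable (fun x => min (max (g x - u x) 0) 1) m := by
    refine (integrable_const (1:ℝ)).mono' hmeas.aestronglyMeasurable ?_
    refine Eventually.of_forall fun x => ?_
    rw [Real.norm_eq_abs, abs_of_nonneg (le_min (le_max_right _ _) zero_le_one)]
    exact min_le_right _ _
  have key : ∀ n, ∫ x, min (max (g x - u x) 0) 1 ∂m ≤ dL0 m (f n) g := by
    intro n
    refine MeasureTheory.integral_mono_ae hint (integrable_min_abs _ _) ?_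
    filter_upwards [AEEqFun.coeFn_le.2 (hle n)] with x hx
    rcases le_or_gt (g x) (u x) with hgu | hgu
    · rw [max_eq_right (by linarith)]
      rw [min_eq_left zero_le_one]
      exact le_min (abs_nonneg _) zero_le_one
    · rw [max_eq_left (by linarith)]
      refine min_le_min ?_ le_rfl
      calc g x - u x ≤ g x - f n x := by linarith
        _ ≤ |f n x - g x| := by rw [abs_sub_comm]; exact le_abs_self _
  have h0 : ∫ x, min (max (g x - u x) 0) 1 ∂m = 0 :=
    le_antisymm (ge_of_tendsto h (Eventually.of_forall key))
      (MeasureTheory.integral_nonneg fun x => le_min (le_max_right _ _) zero_le_one)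
  have hae : (fun x => min (max (g x - u x) 0) 1) =ᵐ[m] 0 :=
    (MeasureTheory.integral_eq_zero_iff_of_nonneg_ae
      (Eventually.of_forall fun x => le_min (le_max_right _ _) zero_le_one) hint).mp h0
  refine AEEqFun.coeFn_le.1 ?_
  filter_upwards [hae] with x hx
  have hx' : min (max (g x - u x) 0) 1 = 0 := hx
  by_contra hgu
  push_neg at hgu
  have h1 : max (g x - u x) 0 = g x - u x := max_eq_left (by linarith)
  rw [h1] at hx'
  have : (0:ℝ) < min (g x - u x) 1 := lt_min (by linarith) one_pos
  linarith [this.trans_eq hx']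

variable {Ω : Type*} [MeasurableSpace Ω]

lemma L0Measure.add_of_disjoint (ν : L0Measure m Ω) {A B : Set Ω}
    (hA : MeasurableSet A) (hB : MeasurableSet B) (hAB : Disjoint A B) :
    ν.toFun (A ∪ B) = ν.toFun A + ν.toFun B := by
  classical
  set C : ℕ → Set Ω := fun n => if n = 0 then A else if n = 1 then B else ∅ with hC
  have hCm : ∀ n, MeasurableSet (C n) := by
    intro n; simp only [hC]
    split_ifs
    exacts [hA, hB, MeasurableSet.empty]
  have hCd : Pairwise (Disjoint on C) := by
    intro i j hij
    have h0 : C 0 = A := by simp [hC]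
    have h1 : C 1 = B := by simp [hC]
    have h2 : ∀ k, C (k+2) = ∅ := fun k => by simp [hC]
    rcases i with _|_|i <;> rcases j with _|_|j <;>
      simp only [Function.onFun, h0, h1, h2] <;>
      first
        | exact absurd rfl hij
        | exact hAB
        | exact hAB.symm
        | exact Set.disjoint_empty _
        | exact Set.empty_disjoint _
  have hCU : (⋃ n, C n) = A ∪ B := by
    apply Set.Subset.antisymm
    · refine Set.iUnion_subset fun n => ?_
      rcases n with _|_|n <;> simp [hC]
    · rintro x (hx | hx)
      · exact Set.mem_iUnion.2 ⟨0, by simpa [hC] using hx⟩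
      · exact Set.mem_iUnion.2 ⟨1, by simpa [hC] using hx⟩
  have ht := ν.additive' C hCm hCd
  have hev : ∀ᶠ F : Finset ℕ in atTop,
      ∑ i ∈ F, ν.toFun (C i) = ν.toFun A + ν.toFun B := by
    filter_upwards [Filter.eventually_ge_atTop ({0,1} : Finset ℕ)] with F hF
    have hsub : ({0,1} : Finset ℕ) ⊆ F := hF
    have h1 : ∑ i ∈ ({0,1} : Finset ℕ), ν.toFun (C i) = ∑ i ∈ F, ν.toFun (C i) := by
      refine Finset.sum_subset hsub fun i _ hni => ?_
      have hemp : C i = ∅ := by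
        rcases i with _|_|i
        · simp at hni
        · simp at hni
        · simp [hC]
      rw [hemp, ν.empty']
    rw [← h1]
    rw [Finset.sum_pair (by norm_num : (0:ℕ) ≠ 1)]
    simp [hC]
  have hconst : Tendsto (fun _ : Finset ℕ =>
      dL0 m (ν.toFun A + ν.toFun B) (ν.toFun (⋃ n, C n))) atTop (𝓝 0) := by
    refine ht.congr' ?_
    filter_upwards [hev] with F hF
    rw [hF]
  rw [hCU] at hconst
  have h0 : (0:ℝ) = dL0 m (ν.toFun A + ν.toFun B) (ν.toFun (A ∪ B)) :=
    tendsto_nhds_unique hconst tendsto_const_nhds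
  exact (eq_of_dL0_eq_zero h0.symm).symm

lemma L0Measure.tendsto_sum_range (ν : L0Measure m Ω) (A : ℕ → Set Ω)
    (hA : ∀ n, MeasurableSet (A n)) (hd : Pairwise (Disjoint on A)) :
    Tendsto (fun K => dL0 m (∑ i ∈ Finset.range K, ν.toFun (A i)) (ν.toFun (⋃ n, A n)))
      atTop (𝓝 0) :=
  (ν.additive' A hA hd).comp Filter.tendsto_finset_range

variable (μ : BVMeasure m Ω)

lemma l0_abs_add (f g : X →ₘ[m] ℝ) : |f + g| ≤ |f| + |g| := by
  rw [← AEEqFun.coeFn_le]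
  filter_upwards [AEEqFun.coeFn_abs (f+g), AEEqFun.coeFn_add f g,
    AEEqFun.coeFn_add |f| |g|, AEEqFun.coeFn_abs f, AEEqFun.coeFn_abs g]
    with x h1 h2 h3 h4 h5
  simp only [h1, h2, h3, Pi.add_apply, h4, h5]
  exact abs_add_le _ _

lemma abs_finsetSum_le {ι : Type*} (s : Finset ι) (f : ι → X →ₘ[m] ℝ) :
    |∑ i ∈ s, f i| ≤ ∑ i ∈ s, |f i| := by
  classical
  induction s using Finset.cons_induction with
  | empty => simp
  | cons i s his ih =>
    simp only [Finset.sum_cons]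
    exact le_trans (l0_abs_add _ _) (add_le_add le_rfl ih)

lemma sum_range_two_mul {M : Type*} [AddCommMonoid M] (f : ℕ → M) (n : ℕ) :
    ∑ l ∈ Finset.range (2*n), f l
      = ∑ i ∈ Finset.range n, f (2*i) + ∑ i ∈ Finset.range n, f (2*i+1) := by
  induction n with
  | zero => simp
  | succ n ih =>
    have h2 : 2*(n+1) = (2*n)+1+1 := by ring
    rw [h2, Finset.sum_range_succ, Finset.sum_range_succ, ih,
      Finset.sum_range_succ, Finset.sum_range_succ]
    abel

lemma partial_le_tv {A : Set Ω} (hA : MeasurableSet A) {C : ℕ → Set Ω}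
    (hC : ∀ n, MeasurableSet (C n)) (hd : Pairwise (Disjoint on C))
    (hsub : (⋃ n, C n) ⊆ A) (n : ℕ) :
    ∑ i ∈ Finset.range n, |μ.toFun (C i)| ≤ μ.tv A := by
  classical
  set D : ℕ → Set Ω := fun k => Nat.casesOn k (A \ ⋃ n, C n) C with hDdef
  have hDm : ∀ k, MeasurableSet (D k) := by
    rintro (_|k)
    · exact hA.diff (MeasurableSet.iUnion hC)
    · exact hC k
  have hDd : Pairwise (Disjoint on D) := by
    rintro (_|i) (_|j) hij
    · exact absurd rfl hij
    · exact Set.disjoint_left.2 fun x hx hx' => hx.2 (Set.mem_iUnion.2 ⟨j, hx'⟩)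
    · exact Set.disjoint_right.2 fun x hx hx' => hx.2 (Set.mem_iUnion.2 ⟨i, hx'⟩)
    · exact hd fun h => hij (congrArg Nat.succ h)
  have hDU : (⋃ k, D k) = A := by
    apply Set.Subset.antisymm
    · refine Set.iUnion_subset ?_
      rintro (_|k)
      · exact Set.diff_subset
      · exact (Set.subset_iUnion C k).trans hsub
    · intro x hx
      by_cases hx' : x ∈ ⋃ n, C n
      · obtain ⟨k, hk⟩ := Set.mem_iUnion.1 hx'
        exact Set.mem_iUnion.2 ⟨k+1, hk⟩
      · exact Set.mem_iUnion.2 ⟨0, ⟨hx, hx'⟩⟩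
  have key := (μ.htv A hA).1 D hDm hDd hDU (n+1)
  rw [Finset.sum_range_succ'] at key
  refine le_trans (le_add_of_nonneg_right (abs_nonneg _)) key

lemma tv_le_of_forall_partial {A : Set Ω} (hA : MeasurableSet A) {u : X →ₘ[m] ℝ}
    (hu : ∀ B : ℕ → Set Ω, (∀ n, MeasurableSet (B n)) → Pairwise (Disjoint on B) →
      (⋃ n, B n) = A → ∀ n, ∑ i ∈ Finset.range n, |μ.toFun (B i)| ≤ u) :
    μ.tv A ≤ u := by
  refine (μ.htv A hA).2.2 ?_
  rintro g ⟨B, hBm, hBd, hBU, hg⟩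
  exact hg.2 (by rintro p ⟨n, rfl⟩; exact hu B hBm hBd hBU n)

lemma tv_nonneg {A : Set Ω} (hA : MeasurableSet A) : 0 ≤ μ.tv A := by
  have := partial_le_tv μ hA (C := fun _ => ∅) (fun _ => MeasurableSet.empty)
    (fun i j _ => by simp [Function.onFun]) (by simp) 0
  simpa using this

lemma tv_empty : μ.tv ∅ = 0 := by
  refine le_antisymm ?_ (tv_nonneg μ MeasurableSet.empty)
  refine tv_le_of_forall_partial μ MeasurableSet.empty ?_
  intro B _ _ hBU n
  have hBi : ∀ i, B i = ∅ := fun i =>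
    Set.eq_empty_of_subset_empty (hBU ▸ Set.subset_iUnion B i)
  have : ∀ i, |μ.toFun (B i)| = 0 := fun i => by rw [hBi i, μ.empty', abs_zero]
  simp [this]

lemma tv_mono {A B : Set Ω} (hA : MeasurableSet A) (hB : MeasurableSet B)
    (hAB : A ⊆ B) : μ.tv A ≤ μ.tv B := by
  refine tv_le_of_forall_partial μ hA ?_
  intro C hCm hCd hCU n
  exact partial_le_tv μ hB hCm hCd (hCU ▸ hAB) n

lemma tv_union_disjoint {A B : Set Ω} (hA : MeasurableSet A) (hB : MeasurableSet B)
    (hAB : Disjoint A B) : μ.tv (A ∪ B) = μ.tv A + μ.tv B := by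
  refine le_antisymm ?_ ?_
  · -- subadditivity
    refine tv_le_of_forall_partial μ (hA.union hB) ?_
    intro C hCm hCd hCU n
    have hsplit : ∀ i, μ.toFun (C i) = μ.toFun (C i ∩ A) + μ.toFun (C i ∩ B) := by
      intro i
      have hCiA : C i ∩ A ∪ C i ∩ B = C i := by
        rw [← Set.inter_union_distrib_left]
        exact Set.inter_eq_left.2 (hCU ▸ Set.subset_iUnion C i)
      conv_lhs => rw [← hCiA]
      exact μ.toL0Measure.add_of_disjoint ((hCm i).inter hA) ((hCm i).inter hB)
        (hAB.mono Set.inter_subset_right Set.inter_subset_right)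
    calc ∑ i ∈ Finset.range n, |μ.toFun (C i)|
        ≤ ∑ i ∈ Finset.range n, (|μ.toFun (C i ∩ A)| + |μ.toFun (C i ∩ B)|) := by
          refine Finset.sum_le_sum fun i _ => ?_
          rw [hsplit i]; exact l0_abs_add _ _
      _ = ∑ i ∈ Finset.range n, |μ.toFun (C i ∩ A)|
          + ∑ i ∈ Finset.range n, |μ.toFun (C i ∩ B)| := Finset.sum_add_distrib
      _ ≤ μ.tv A + μ.tv B := by
          refine add_le_add ?_ ?_
          · exact partial_le_tv μ hA (fun i => (hCm i).inter hA)
              (fun i j hij => (hCd hij).mono Set.inter_subset_left Set.inter_subset_left)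
              (Set.iUnion_subset fun i => Set.inter_subset_right) n
          · exact partial_le_tv μ hB (fun i => (hCm i).inter hB)
              (fun i j hij => (hCd hij).mono Set.inter_subset_left Set.inter_subset_left)
              (Set.iUnion_subset fun i => Set.inter_subset_right) n
  · -- superadditivity
    have core : ∀ (P Q : ℕ → Set Ω), (∀ i, MeasurableSet (P i)) → Pairwise (Disjoint on P) →
        (⋃ i, P i) = A → (∀ j, MeasurableSet (Q j)) → Pairwise (Disjoint on Q) →
        (⋃ j, Q j) = B → ∀ n k,
        ∑ i ∈ Finset.range n, |μ.toFun (P i)| + ∑ j ∈ Finset.range k, |μ.toFun (Q j)|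
          ≤ μ.tv (A ∪ B) := by
      intro P Q hPm hPd hPU hQm hQd hQU n k
      classical
      set E : ℕ → Set Ω := fun l => if l % 2 = 0 then P (l / 2) else Q (l / 2) with hE
      have hPsub : ∀ i, P i ⊆ A := fun i => hPU ▸ Set.subset_iUnion P i
      have hQsub : ∀ j, Q j ⊆ B := fun j => hQU ▸ Set.subset_iUnion Q j
      have hEm : ∀ l, MeasurableSet (E l) := fun l => by
        simp only [hE]; split_ifs; exacts [hPm _, hQm _]
      have hEd : Pairwise (Disjoint on E) := by
        intro a b hab
        simp only [Function.onFun, hE]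
        split_ifs with h1 h2 h2
        · exact hPd (fun h => hab (by omega))
        · exact hAB.mono (hPsub _) (hQsub _)
        · exact hAB.symm.mono (hQsub _) (hPsub _)
        · exact hQd (fun h => hab (by omega))
      have hEsub : (⋃ l, E l) ⊆ A ∪ B := Set.iUnion_subset fun l => by
        simp only [hE]; split_ifs
        · exact (hPsub _).trans Set.subset_union_left
        · exact (hQsub _).trans Set.subset_union_right
      set M := max n k with hM
      have hkey := partial_le_tv μ (hA.union hB) hEm hEd hEsub (2*M)
      rw [sum_range_two_mul] at hkey
      have hEeven : ∀ i, E (2*i) = P i := fun i => by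
        have hmod : 2*i % 2 = 0 := by omega
        have hdiv : 2*i / 2 = i := by omega
        simp only [hE, hmod, hdiv, if_true, reduceIte]
      have hEodd : ∀ i, E (2*i+1) = Q i := fun i => by
        have hmod : (2*i+1) % 2 = 1 := by omega
        have hdiv : (2*i+1) / 2 = i := by omega
        simp only [hE, hmod, hdiv, one_ne_zero, if_false, reduceIte]
      simp only [hEeven, hEodd] at hkey
      refine le_trans (add_le_add ?_ ?_) hkey
      · exact Finset.sum_le_sum_of_subset_of_nonneg
          (Finset.range_subset_range.2 (le_max_left n k)) (fun i _ _ => abs_nonneg _)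
      · exact Finset.sum_le_sum_of_subset_of_nonneg
          (Finset.range_subset_range.2 (le_max_right n k)) (fun i _ _ => abs_nonneg _)
    have step : ∀ g ∈ partitionSums m μ.toFun A, g + μ.tv B ≤ μ.tv (A ∪ B) := by
      rintro g ⟨P, hPm, hPd, hPU, hg⟩
      rw [← le_sub_iff_add_le']
      refine (μ.htv B hB).2.2 ?_
      rintro h ⟨Q, hQm, hQd, hQU, hh⟩
      rw [le_sub_iff_add_le', ← le_sub_iff_add_le]
      refine hg.2 ?_
      rintro p ⟨np, rfl⟩
      rw [le_sub_iff_add_le, ← le_sub_iff_add_le']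
      refine hh.2 ?_
      rintro q ⟨kq, rfl⟩
      rw [le_sub_iff_add_le']
      exact core P Q hPm hPd hPU hQm hQd hQU np kq
    rw [← le_sub_iff_add_le]
    refine (μ.htv A hA).2.2 ?_
    intro g hgmem
    rw [le_sub_iff_add_le]
    exact step g hgmem

lemma tv_sum_range {F : ℕ → Set Ω} (hF : ∀ n, MeasurableSet (F n))
    (hd : Pairwise (Disjoint on F)) (n : ℕ) :
    μ.tv (⋃ k ∈ Finset.range n, F k) = ∑ k ∈ Finset.range n, μ.tv (F k) := by
  induction n with
  | zero => simpa using tv_empty μ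
  | succ n ih =>
    have hsplit : (⋃ k ∈ Finset.range (n+1), F k)
        = (⋃ k ∈ Finset.range n, F k) ∪ F n := by
      rw [Finset.range_add_one, Finset.set_biUnion_insert, Set.union_comm]
    have hdisj : Disjoint (⋃ k ∈ Finset.range n, F k) (F n) := by
      refine Set.disjoint_left.2 fun x hx hx' => ?_
      obtain ⟨k, hk, hxk⟩ := Set.mem_iUnion₂.1 hx
      exact Set.disjoint_left.1 (hd (Finset.mem_range.1 hk).ne) hxk hx'
    rw [hsplit, tv_union_disjoint μ
      ((Finset.range n).measurableSet_biUnion fun k _ => hF k) (hF n) hdisj,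
      ih, Finset.sum_range_succ]

lemma isLUB_tv_iUnion {F : ℕ → Set Ω} (hF : ∀ n, MeasurableSet (F n))
    (hd : Pairwise (Disjoint on F)) :
    IsLUB (Set.range fun n => ∑ k ∈ Finset.range n, μ.tv (F k)) (μ.tv (⋃ n, F n)) := by
  constructor
  · rintro t ⟨n, rfl⟩
    show ∑ k ∈ Finset.range n, μ.tv (F k) ≤ μ.tv (⋃ n, F n)
    rw [← tv_sum_range μ hF hd n]
    exact tv_mono μ ((Finset.range n).measurableSet_biUnion fun k _ => hF k)
      (MeasurableSet.iUnion hF)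
      (Set.iUnion₂_subset fun k _ => Set.subset_iUnion F k)
  · intro u hu
    refine (μ.htv _ (MeasurableSet.iUnion hF)).2.2 ?_
    rintro g ⟨B, hBm, hBd, hBU, hg⟩
    refine hg.2 ?_
    rintro p ⟨n, rfl⟩
    set q : ℕ → X →ₘ[m] ℝ := fun K =>
      ∑ i ∈ Finset.range n, |∑ k ∈ Finset.range K, μ.toFun (B i ∩ F k)| with hq
    have hqle : ∀ K, q K ≤ u := by
      intro K
      calc q K ≤ ∑ i ∈ Finset.range n, ∑ k ∈ Finset.range K, |μ.toFun (B i ∩ F k)| :=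
            Finset.sum_le_sum fun i _ => abs_finsetSum_le _ _
        _ = ∑ k ∈ Finset.range K, ∑ i ∈ Finset.range n, |μ.toFun (B i ∩ F k)| :=
            Finset.sum_comm
        _ ≤ ∑ k ∈ Finset.range K, μ.tv (F k) := by
            refine Finset.sum_le_sum fun k _ => ?_
            exact partial_le_tv μ (hF k) (fun i => (hBm i).inter (hF k))
              (fun i j hij => (hBd hij).mono Set.inter_subset_left Set.inter_subset_left)
              (Set.iUnion_subset fun i => Set.inter_subset_right) n
        _ ≤ u := hu ⟨K, rfl⟩
    have hi : ∀ i, Tendsto (fun K =>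
        dL0 m (∑ k ∈ Finset.range K, μ.toFun (B i ∩ F k)) (μ.toFun (B i)))
        atTop (𝓝 0) := by
      intro i
      have hU : (⋃ k, B i ∩ F k) = B i := by
        rw [← Set.inter_iUnion]
        exact Set.inter_eq_left.2 (hBU ▸ Set.subset_iUnion B i)
      have := μ.toL0Measure.tendsto_sum_range (fun k => B i ∩ F k)
        (fun k => (hBm i).inter (hF k))
        (fun a b hab => (hd hab).mono Set.inter_subset_right Set.inter_subset_right)
      rwa [hU] at this
    have htend : Tendsto (fun K =>
        dL0 m (q K) (∑ i ∈ Finset.range n, |μ.toFun (B i)|)) atTop (𝓝 0) := by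
      have hsum : Tendsto (fun K => ∑ i ∈ Finset.range n,
          dL0 m (∑ k ∈ Finset.range K, μ.toFun (B i ∩ F k)) (μ.toFun (B i)))
          atTop (𝓝 0) := by
        have := tendsto_finset_sum (Finset.range n) (fun i _ => hi i)
        simpa using this
      refine squeeze_zero (fun K => dL0_nonneg _ _) (fun K => ?_) hsum
      calc dL0 m (q K) (∑ i ∈ Finset.range n, |μ.toFun (B i)|)
          ≤ ∑ i ∈ Finset.range n,
            dL0 m |∑ k ∈ Finset.range K, μ.toFun (B i ∩ F k)| |μ.toFun (B i)| :=
            dL0_sum_le _ _ _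
        _ ≤ ∑ i ∈ Finset.range n,
            dL0 m (∑ k ∈ Finset.range K, μ.toFun (B i ∩ F k)) (μ.toFun (B i)) :=
            Finset.sum_le_sum fun i _ => dL0_abs_le _ _
    exact le_of_tendsto_dL0 hqle htend

/-- The weight `(1 + |μ|(Ω))⁻¹` used to build a finite scalar control measure. -/
def tvWeight : X → ℝ≥0∞ := fun x => (ENNReal.ofReal (1 + max ((μ.tv Set.univ) x) 0))⁻¹

lemma tvWeight_measurable : Measurable (tvWeight μ) :=
  ((measurable_const.add ((μ.tv Set.univ).measurable.max
    measurable_const)).ennreal_ofReal).inv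

lemma tvWeight_ne_zero (x : X) : tvWeight μ x ≠ 0 := by
  simp [tvWeight, ENNReal.inv_eq_zero, ENNReal.ofReal_ne_top]

lemma tvWeight_le_one (x : X) : tvWeight μ x ≤ 1 := by
  rw [tvWeight, ENNReal.inv_le_one]
  exact ENNReal.one_le_ofReal.2 (le_add_of_nonneg_right (le_max_right _ _))

/-- The scalar control function `A ↦ ∫ |μ|(A)/(1+|μ|(Ω)) dm`. -/
def lamFn : Set Ω → ℝ≥0∞ := fun A =>
  ∫⁻ x, ENNReal.ofReal ((μ.tv A) x) * tvWeight μ x ∂m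

lemma lamFn_empty : lamFn μ ∅ = 0 := by
  rw [lamFn]
  have h0 : (fun x => ENNReal.ofReal ((μ.tv ∅) x) * tvWeight μ x) =ᵐ[m] 0 := by
    have := tv_empty μ
    filter_upwards [AEEqFun.coeFn_zero (β := ℝ) (μ := m)] with x hx
    rw [this, hx]
    simp
  rw [MeasureTheory.lintegral_congr_ae h0]
  simp

lemma lamFn_iUnion (F : ℕ → Set Ω) (hF : ∀ n, MeasurableSet (F n))
    (hd : Pairwise (Disjoint on F)) :
    lamFn μ (⋃ n, F n) = ∑' n, lamFn μ (F n) := by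
  classical
  set s : ℕ → X →ₘ[m] ℝ := fun K => ∑ k ∈ Finset.range K, μ.tv (F k) with hs
  have hlub := isLUB_tv_iUnion μ hF hd
  have htvnn : ∀ k, (0:X →ₘ[m] ℝ) ≤ μ.tv (F k) := fun k => tv_nonneg μ (hF k)
  have hnn : ∀ᵐ x ∂m, ∀ k, 0 ≤ (μ.tv (F k)) x := by
    rw [MeasureTheory.ae_all_iff]
    intro k
    filter_upwards [AEEqFun.coeFn_le.2 (htvnn k), AEEqFun.coeFn_zero (β := ℝ) (μ := m)]
      with x h1 h2
    rw [h2] at h1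
    simpa using h1
  have hcoesum : ∀ᵐ x ∂m, ∀ K, (s K) x = ∑ k ∈ Finset.range K, (μ.tv (F k)) x := by
    rw [MeasureTheory.ae_all_iff]
    intro K
    exact coeFn_finsetSum _ _
  have hub : ∀ᵐ x ∂m, ∀ K, (s K) x ≤ (μ.tv (⋃ n, F n)) x := by
    rw [MeasureTheory.ae_all_iff]
    intro K
    exact AEEqFun.coeFn_le.2 (hlub.1 ⟨K, rfl⟩)
  set T : X → ℝ≥0∞ := fun x => ⨆ K, ENNReal.ofReal ((s K) x) with hT
  have hTmeas : Measurable T :=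
    Measurable.iSup (fun K => (s K).measurable.ennreal_ofReal)
  set v : X → ℝ := fun x => if T x = ∞ then (μ.tv (⋃ n, F n)) x
    else min ((T x).toReal) ((μ.tv (⋃ n, F n)) x) with hv
  have hvmeas : Measurable v := by
    refine Measurable.ite ?_ (μ.tv _).measurable
      ((hTmeas.ennreal_toReal).min (μ.tv _).measurable)
    exact hTmeas (measurableSet_singleton ∞)
  have hsup : ∀ᵐ x ∂m,
      ENNReal.ofReal ((μ.tv (⋃ n, F n)) x) = ⨆ K, ENNReal.ofReal ((s K) x) := by
    set vL : X →ₘ[m] ℝ := AEEqFun.mk v hvmeas.aestronglyMeasurable with hvL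
    have hvub : ∀ K, s K ≤ vL := by
      intro K
      rw [← AEEqFun.coeFn_le]
      filter_upwards [AEEqFun.coeFn_mk v hvmeas.aestronglyMeasurable, hub, hnn, hcoesum]
        with x hmk h1 h2 h3
      rw [hmk]
      simp only [hv]
      have hsnn : 0 ≤ (s K) x := by
        rw [h3 K]; exact Finset.sum_nonneg fun k _ => h2 k
      by_cases hTx : T x = ∞
      · rw [if_pos hTx]; exact h1 K
      · rw [if_neg hTx]
        refine le_min ?_ (h1 K)
        have hle : ENNReal.ofReal ((s K) x) ≤ T x :=
          le_iSup (fun K => ENNReal.ofReal ((s K) x)) K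
        have := ENNReal.toReal_mono hTx hle
        rwa [ENNReal.toReal_ofReal hsnn] at this
    have htvle : μ.tv (⋃ n, F n) ≤ vL :=
      hlub.2 (by rintro t ⟨K, rfl⟩; exact hvub K)
    filter_upwards [AEEqFun.coeFn_le.2 htvle,
      AEEqFun.coeFn_mk v hvmeas.aestronglyMeasurable, hub] with x h1 hmk h3
    rw [hmk] at h1
    simp only [hv] at h1
    refine le_antisymm ?_ (iSup_le fun K => ENNReal.ofReal_le_ofReal (h3 K))
    by_cases hTx : T x = ∞
    · show ENNReal.ofReal ((μ.tv (⋃ n, F n)) x) ≤ T x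
      rw [hTx]; exact le_top
    · rw [if_neg hTx] at h1
      have h4 : (μ.tv (⋃ n, F n)) x ≤ (T x).toReal := h1.trans (min_le_left _ _)
      calc ENNReal.ofReal ((μ.tv (⋃ n, F n)) x) ≤ ENNReal.ofReal ((T x).toReal) :=
            ENNReal.ofReal_le_ofReal h4
        _ = T x := ENNReal.ofReal_toReal hTx
  have hwmeas := tvWeight_measurable μ
  have step1 : lamFn μ (⋃ n, F n)
      = ∫⁻ x, ⨆ K, ENNReal.ofReal ((s K) x) * tvWeight μ x ∂m := by
    rw [lamFn]
    refine MeasureTheory.lintegral_congr_ae ?_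
    filter_upwards [hsup] with x hx
    rw [hx, ENNReal.iSup_mul]
  have step2 : ∫⁻ x, ⨆ K, ENNReal.ofReal ((s K) x) * tvWeight μ x ∂m
      = ⨆ K, ∫⁻ x, ENNReal.ofReal ((s K) x) * tvWeight μ x ∂m := by
    refine MeasureTheory.lintegral_iSup'
      (fun K => ((s K).measurable.ennreal_ofReal.mul hwmeas).aemeasurable) ?_
    filter_upwards [hcoesum, hnn] with x h1 h2
    intro a b hab
    refine mul_le_mul_left (ENNReal.ofReal_le_ofReal ?_) _
    rw [h1 a, h1 b]
    exact Finset.sum_le_sum_of_subset_of_nonneg (Finset.range_subset_range.2 hab)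
      fun k hk _ => h2 k
  have step3 : ∀ K, ∫⁻ x, ENNReal.ofReal ((s K) x) * tvWeight μ x ∂m
      = ∑ k ∈ Finset.range K, lamFn μ (F k) := by
    intro K
    have hcongr : (fun x => ENNReal.ofReal ((s K) x) * tvWeight μ x)
        =ᵐ[m] (fun x => ∑ k ∈ Finset.range K,
          ENNReal.ofReal ((μ.tv (F k)) x) * tvWeight μ x) := by
      filter_upwards [hcoesum, hnn] with x h1 h2
      rw [h1 K, ← Finset.sum_mul, ENNReal.ofReal_sum_of_nonneg fun k _ => h2 k]
    rw [MeasureTheory.lintegral_congr_ae hcongr,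
      MeasureTheory.lintegral_finset_sum'
        (f := fun k x => ENNReal.ofReal ((μ.tv (F k)) x) * tvWeight μ x) _
        (fun k _ => ((μ.tv (F k)).measurable.ennreal_ofReal.mul hwmeas).aemeasurable)]
    rfl
  rw [step1, step2, ENNReal.tsum_eq_iSup_nat]
  exact iSup_congr step3

/-- The scalar control measure. -/
def lam : Measure Ω :=
  Measure.ofMeasurable (fun A _ => lamFn μ A) (lamFn_empty μ)
    (fun F hF hd => lamFn_iUnion μ F hF hd)

lemma lam_apply {A : Set Ω} (hA : MeasurableSet A) : lam μ A = lamFn μ A :=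
  Measure.ofMeasurable_apply A hA

instance : IsFiniteMeasure (lam μ) := by
  refine ⟨?_⟩
  rw [lam_apply μ MeasurableSet.univ]
  have hb : lamFn μ Set.univ ≤ ∫⁻ _, 1 ∂m := by
    refine MeasureTheory.lintegral_mono fun x => ?_
    rw [tvWeight]
    set t := (μ.tv Set.univ) x with ht
    have h1 : ENNReal.ofReal t ≤ ENNReal.ofReal (1 + max t 0) :=
      ENNReal.ofReal_le_ofReal (by
        have := le_max_left t 0
        linarith)
    calc ENNReal.ofReal t * (ENNReal.ofReal (1 + max t 0))⁻¹
        ≤ ENNReal.ofReal (1 + max t 0) * (ENNReal.ofReal (1 + max t 0))⁻¹ :=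
          mul_le_mul_left h1 _
      _ = 1 := ENNReal.mul_inv_cancel
          (by
            refine (ENNReal.ofReal_pos.2 ?_).ne'
            have := le_max_right t 0
            linarith)
          ENNReal.ofReal_ne_top
  refine lt_of_le_of_lt hb ?_
  rw [MeasureTheory.lintegral_one, measure_univ]
  exact ENNReal.one_lt_top

/-- Key transfer principle: if `f ≤ g` up to total variations of sets of arbitrarily
small control measure, then `f ≤ g`. -/
lemma le_of_forall_lam {f g : X →ₘ[m] ℝ}
    (h : ∀ ε : ℝ≥0∞, 0 < ε → ∃ D : Set Ω, MeasurableSet D ∧ lam μ D < ε ∧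
      f ≤ g + μ.tv D) : f ≤ g := by
  set I := ∫⁻ x, ENNReal.ofReal (f x - g x) * tvWeight μ x ∂m with hI
  have hImeas : AEMeasurable (fun x => ENNReal.ofReal (f x - g x) * tvWeight μ x) m :=
    (((f.measurable.sub g.measurable).ennreal_ofReal).mul
      (tvWeight_measurable μ)).aemeasurable
  have key : ∀ ε : ℝ≥0∞, 0 < ε → I < ε := by
    intro ε hε
    obtain ⟨D, hD, hlam, hfg⟩ := h ε hε
    have hle : I ≤ lam μ D := by
      rw [lam_apply μ hD, lamFn, hI]
      refine MeasureTheory.lintegral_mono_ae ?_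
      filter_upwards [AEEqFun.coeFn_le.2 hfg, AEEqFun.coeFn_add g (μ.tv D)]
        with x hx h2
      have hux : f x - g x ≤ (μ.tv D) x := by
        rw [h2, Pi.add_apply] at hx
        linarith
      exact mul_le_mul_left (ENNReal.ofReal_le_ofReal hux) _
    exact hle.trans_lt hlam
  have hI0 : I = 0 := by
    by_contra h0
    exact absurd (key I (pos_iff_ne_zero.2 h0)) (lt_irrefl _)
  have hae := (MeasureTheory.lintegral_eq_zero_iff' hImeas).1 hI0
  refine AEEqFun.coeFn_le.1 ?_
  filter_upwards [hae] with x hx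
  have hx' : ENNReal.ofReal (f x - g x) * tvWeight μ x = 0 := hx
  rcases mul_eq_zero.1 hx' with h0 | h0
  · have := ENNReal.ofReal_eq_zero.1 h0
    linarith
  · exact absurd h0 (tvWeight_ne_zero μ x)

end Probability

/-- Tightness: any finite Borel measure on a complete separable metric space is tight. -/
lemma exists_isCompact_measure_compl_lt {Ω : Type*} [MetricSpace Ω] [CompleteSpace Ω]
    [TopologicalSpace.SeparableSpace Ω] [MeasurableSpace Ω] [BorelSpace Ω]
    (ν : Measure Ω) [IsFiniteMeasure ν] {ε : ℝ≥0∞} (hε : 0 < ε) :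
    ∃ K : Set Ω, IsCompact K ∧ ν Kᶜ < ε := by
  rcases isEmpty_or_nonempty Ω with hΩ | hΩ
  · refine ⟨∅, isCompact_empty, ?_⟩
    have h1 : (∅ : Set Ω)ᶜ = ∅ := Set.eq_empty_of_isEmpty _
    rw [h1, measure_empty]
    exact hε
  · set ε' := min ε 1 with hε'
    have hε'0 : ε' ≠ 0 := (lt_min hε zero_lt_one).ne'
    have hε'top : ε' ≠ ∞ := by
      refine ne_top_of_le_ne_top ENNReal.one_ne_top (min_le_right _ _)
    obtain ⟨u, hu⟩ := TopologicalSpace.exists_dense_seq Ω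
    set S : ℕ → ℕ → Set Ω :=
      fun j n => ⋃ i ∈ Finset.range n, Metric.closedBall (u i) (1/(j+1) : ℝ) with hS
    have hSclosed : ∀ j n, IsClosed (S j n) := fun j n =>
      Set.Finite.isClosed_biUnion (Finset.range n).finite_toSet
        fun i _ => Metric.isClosed_closedBall
    have hSmono : ∀ j, Monotone (S j) := by
      intro j a b hab
      refine Set.iUnion₂_subset fun i hi => ?_
      exact Set.subset_iUnion₂ (s := fun i (_ : i ∈ Finset.range b) =>
        Metric.closedBall (u i) (1/(j+1) : ℝ)) i
        (Finset.mem_range.2 (lt_of_lt_of_le (Finset.mem_range.1 hi) hab))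
    have hSuniv : ∀ j, (⋃ n, S j n) = Set.univ := by
      intro j
      apply Set.eq_univ_of_forall
      intro x
      have hpos : (0:ℝ) < 1/(j+1) := by positivity
      obtain ⟨i, hi⟩ := hu.exists_dist_lt x hpos
      refine Set.mem_iUnion.2 ⟨i+1, ?_⟩
      refine Set.mem_biUnion (Finset.mem_range.2 (Nat.lt_succ_self i)) ?_
      rw [Metric.mem_closedBall]
      exact hi.le
    have hchoice : ∀ j : ℕ, ∃ N, ν (S j N)ᶜ < ε' * (2:ℝ≥0∞)⁻¹ ^ (j+2) := by
      intro j
      have hpos : (0:ℝ≥0∞) < ε' * (2:ℝ≥0∞)⁻¹ ^ (j+2) := by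
        refine ENNReal.mul_pos hε'0 ?_
        exact (pow_ne_zero _ (ENNReal.inv_ne_zero.2 ENNReal.ofNat_ne_top))
      have htend : Tendsto (fun n => ν (S j n)ᶜ) atTop (𝓝 (ν (⋂ n, (S j n)ᶜ))) := by
        have := MeasureTheory.tendsto_measure_iInter_atTop
          (μ := ν) (s := fun n => (S j n)ᶜ)
          (fun n => ((hSclosed j n).measurableSet.compl).nullMeasurableSet)
          (fun a b hab => Set.compl_subset_compl.2 (hSmono j hab))
          ⟨0, measure_ne_top ν _⟩
        exact this
      have hempty : (⋂ n, (S j n)ᶜ) = ∅ := by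
        rw [← Set.compl_iUnion, hSuniv j, Set.compl_univ]
      rw [hempty, measure_empty] at htend
      exact (htend.eventually_lt_const hpos).exists
    choose N hN using hchoice
    set K := ⋂ j, S j (N j) with hK
    have hKc : IsClosed K := isClosed_iInter fun j => hSclosed _ _
    have hKtb : TotallyBounded K := by
      rw [Metric.totallyBounded_iff]
      intro δ hδ
      obtain ⟨j, hj⟩ := exists_nat_one_div_lt hδ
      refine ⟨u '' {i | i < N j}, (Set.finite_Iio (N j)).image u, ?_⟩
      intro x hx
      have hx' : x ∈ S j (N j) := Set.mem_iInter.1 hx j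
      obtain ⟨i, hi, hxi⟩ := Set.mem_iUnion₂.1 hx'
      refine Set.mem_biUnion ⟨i, Finset.mem_range.1 hi, rfl⟩ ?_
      rw [Metric.mem_ball]
      calc dist x (u i) ≤ 1/(j+1) := Metric.mem_closedBall.1 hxi
        _ < δ := by exact_mod_cast hj
    have hKcomp : IsCompact K := TotallyBounded.isCompact_of_isClosed hKtb hKc
    refine ⟨K, hKcomp, ?_⟩
    have hcover : Kᶜ = ⋃ j, (S j (N j))ᶜ := by
      rw [hK, Set.compl_iInter]
    have hhalf : ∑' (j:ℕ), ε' * (2:ℝ≥0∞)⁻¹ ^ (j+2) = ε' * 2⁻¹ := by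
      rw [ENNReal.tsum_mul_left]
      have : ∑' (j:ℕ), (2:ℝ≥0∞)⁻¹ ^ (j+2) = 2⁻¹ := by
        have h1 : ∀ j:ℕ, (2:ℝ≥0∞)⁻¹ ^ (j+2) = (2:ℝ≥0∞)⁻¹^2 * 2⁻¹^j := by
          intro j; ring
        rw [show (∑' (j:ℕ), (2:ℝ≥0∞)⁻¹ ^ (j+2))
            = ∑' (j:ℕ), (2:ℝ≥0∞)⁻¹^2 * 2⁻¹^j from tsum_congr h1]
        rw [ENNReal.tsum_mul_left, ENNReal.tsum_geometric]
        have h2 : (1:ℝ≥0∞) - 2⁻¹ = 2⁻¹ := ENNReal.one_sub_inv_two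
        rw [h2, inv_inv]
        have h3 : ((2:ℝ≥0∞)⁻¹)^2 * 2 = 2⁻¹ := by
          rw [pow_two, mul_assoc, ENNReal.inv_mul_cancel two_ne_zero ENNReal.ofNat_ne_top,
            mul_one]
        rw [h3]
      rw [this]
    calc ν Kᶜ ≤ ∑' j, ν (S j (N j))ᶜ := by rw [hcover]; exact measure_iUnion_le _
      _ ≤ ∑' (j:ℕ), ε' * (2:ℝ≥0∞)⁻¹ ^ (j+2) := ENNReal.tsum_le_tsum fun j => (hN j).le
      _ = ε' * 2⁻¹ := hhalf
      _ < ε' := by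
          rw [← div_eq_mul_inv]
          exact ENNReal.half_lt_self hε'0 hε'top
      _ ≤ ε := min_le_left _ _

end Aux

open scoped ENNReal
open MeasureTheory

/-- On a complete separable metric space, every Borel `L⁰`-valued measure
of bounded variation is Radon: `𝓜(Ω; L⁰(m)) = 𝔐(Ω; L⁰(m))`. -/
theorem statement10 {X : Type*} [MeasurableSpace X] (m : Measure X) [IsProbabilityMeasure m]
    {Ω : Type*} [MetricSpace Ω] [CompleteSpace Ω] [TopologicalSpace.SeparableSpace Ω]
    [MeasurableSpace Ω] [BorelSpace Ω] (μ : BVMeasure m Ω) :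
    IsRadonL0 m μ := by
  constructor
  · -- inner regularity on opens
    intro U hU
    constructor
    · rintro g ⟨K, hK, hKU, rfl⟩
      exact tv_mono μ hK.isClosed.measurableSet hU.measurableSet hKU
    · intro u hu
      refine le_of_forall_lam μ ?_
      intro ε hε
      have hε2 : (0:ℝ≥0∞) < ε/2 := ENNReal.half_pos hε.ne'
      obtain ⟨C, hCU, hCclosed, hC⟩ := hU.measurableSet.exists_isClosed_diff_lt
        (μ := lam μ) (measure_ne_top (lam μ) U) hε2.ne'
      obtain ⟨Kt, hKt, hKtc⟩ := exists_isCompact_measure_compl_lt (lam μ) hε2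
      set K := C ∩ Kt with hKdef
      have hKcomp : IsCompact K := hKt.inter_left hCclosed
      have hKU' : K ⊆ U := fun x hx => hCU hx.1
      refine ⟨U \ K, hU.measurableSet.diff hKcomp.isClosed.measurableSet, ?_, ?_⟩
      · have hsub : U \ K ⊆ (U \ C) ∪ Ktᶜ := by
          rintro x ⟨hxU, hxK⟩
          by_cases hxC : x ∈ C
          · right; intro hxKt; exact hxK ⟨hxC, hxKt⟩
          · left; exact ⟨hxU, hxC⟩
        calc lam μ (U \ K) ≤ lam μ ((U \ C) ∪ Ktᶜ) := measure_mono hsub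
          _ ≤ lam μ (U \ C) + lam μ Ktᶜ := measure_union_le _ _
          _ < ε/2 + ε/2 := ENNReal.add_lt_add hC hKtc
          _ = ε := ENNReal.add_halves ε
      · have hdisj : Disjoint K (U \ K) :=
          Set.disjoint_left.2 fun x hx hx' => hx'.2 hx
        have hsplit : μ.tv U = μ.tv K + μ.tv (U \ K) := by
          rw [← tv_union_disjoint μ hKcomp.isClosed.measurableSet
            (hU.measurableSet.diff hKcomp.isClosed.measurableSet) hdisj,
            Set.union_diff_cancel hKU']
        rw [hsplit]
        exact add_le_add_left (hu ⟨K, hKcomp, hKU', rfl⟩) _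
  · -- outer regularity
    intro B hB
    constructor
    · rintro g ⟨U, hUo, hBU, rfl⟩
      exact tv_mono μ hB hUo.measurableSet hBU
    · intro l hl
      refine le_of_forall_lam μ ?_
      intro ε hε
      obtain ⟨U, hBU, hUo, _, hUlt⟩ := hB.exists_isOpen_diff_lt
        (μ := lam μ) (measure_ne_top (lam μ) B) hε.ne'
      refine ⟨U \ B, hUo.measurableSet.diff hB, hUlt, ?_⟩
      have hdisj : Disjoint B (U \ B) :=
        Set.disjoint_left.2 fun x hx hx' => hx'.2 hx
      have hsplit : μ.tv U = μ.tv B + μ.tv (U \ B) := by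
        rw [← tv_union_disjoint μ hB (hUo.measurableSet.diff hB) hdisj,
          Set.union_diff_cancel hBU]
      calc l ≤ μ.tv U := hl ⟨U, hUo, hBU, rfl⟩
        _ = μ.tv B + μ.tv (U \ B) := hsplit

end RNMPaper
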